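/- For every ω in the piecewise polynomial space V_h^k (with periodic trace identification) and every integer p ≥ 2, the Godunov-flux nonlinear form is nonnegative on the diagonal: N^d(ω,ω) ≥ 0. -/

import Mathlib

open Polynomial Set

noncomputable section

namespace FW

variable {N : ℕ}

/-- Minus trace `ω⁻` at interface `j+1/2` (right end of cell `j`). -/
def trM (x : Fin (N + 1) → ℝ) (ω : Fin N → Polynomial ℝ) (j : Fin N) : ℝ :=
  (ω j).eval (x j.succ)

/-- Plus trace `ω⁺` at interface `j+1/2` (left end of the next cell, cyclically). -/
def trP [NeZero N] (x : Fin (N + 1) → ℝ) (ω : Fin N → Polynomial ℝ) (j : Fin N) : ℝ :=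
  (ω (j + 1)).eval (x (j + 1).castSucc)

/-- Average trace `{ω}`. -/
def trA [NeZero N] (x : Fin (N + 1) → ℝ) (ω : Fin N → Polynomial ℝ) (j : Fin N) : ℝ :=
  (trP x ω j + trM x ω j) / 2

/-- Jump `[ω]`. -/
def jmp [NeZero N] (x : Fin (N + 1) → ℝ) (ω : Fin N → Polynomial ℝ) (j : Fin N) : ℝ :=
  trP x ω j - trM x ω j

/-- Cell L² pairing `(u, φ)_{I_j}` of a piecewise polynomial with a test polynomial. -/
def ipj (x : Fin (N + 1) → ℝ) (u : Fin N → Polynomial ℝ) (j : Fin N) (φ : Polynomial ℝ) : ℝ :=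
  ∫ t in (x j.castSucc)..(x j.succ), (u j).eval t * φ.eval t

/-- Cell pairing `(f∘u, φ)_{I_j}`. -/
def ipfj (x : Fin (N + 1) → ℝ) (f : ℝ → ℝ) (u : Fin N → Polynomial ℝ) (j : Fin N)
    (φ : Polynomial ℝ) : ℝ :=
  ∫ t in (x j.castSucc)..(x j.succ), f ((u j).eval t) * φ.eval t

/-- Boundary pairing `⟨g, φ⟩_{I_j}` for interface values `g`. -/
def bdj [NeZero N] (x : Fin (N + 1) → ℝ) (g : Fin N → ℝ) (j : Fin N) (φ : Polynomial ℝ) : ℝ :=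
  g j * φ.eval (x j.succ) - g (j - 1) * φ.eval (x j.castSucc)

/-- Membership in the space `V_h^k` of piecewise polynomials of degree at most `k`. -/
def memV (k : ℕ) (ω : Fin N → Polynomial ℝ) : Prop :=
  ∀ j, (ω j).degree ≤ (k : WithBot ℕ)

/-- `L⁻(ω, φ)`. -/
def Lm [NeZero N] (x : Fin (N + 1) → ℝ) (ω φ : Fin N → Polynomial ℝ) : ℝ :=
  ∑ j, (-(ipj x ω j (derivative (φ j))) + bdj x (trM x ω) j (φ j))

/-- `L⁺(ω, φ)`. -/
def Lp [NeZero N] (x : Fin (N + 1) → ℝ) (ω φ : Fin N → Polynomial ℝ) : ℝ :=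
  ∑ j, (-(ipj x ω j (derivative (φ j))) + bdj x (trP x ω) j (φ j))

/-- `L^c(ω, φ)`. -/
def Lc [NeZero N] (x : Fin (N + 1) → ℝ) (ω φ : Fin N → Polynomial ℝ) : ℝ :=
  ∑ j, (-(ipj x ω j (derivative (φ j))) + bdj x (trA x ω) j (φ j))

/-- Godunov numerical flux. -/
def godunov (f : ℝ → ℝ) (c d : ℝ) : ℝ :=
  if c < d then sInf (f '' Set.Icc c d) else sSup (f '' Set.Icc d c)

/-- Conservative numerical flux for `f(u) = u^p/p`, `F(u) = u^(p+1)/(p(p+1))`. -/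
def consFlux (p : ℕ) (c d : ℝ) : ℝ :=
  if c = d then c ^ p / (p : ℝ)
  else (d ^ (p + 1) / ((p : ℝ) * ((p : ℝ) + 1)) - c ^ (p + 1) / ((p : ℝ) * ((p : ℝ) + 1))) / (d - c)

/-- Dissipative (Godunov-flux) nonlinear form `N^d`. -/
def Nd [NeZero N] (x : Fin (N + 1) → ℝ) (f : ℝ → ℝ) (ω φ : Fin N → Polynomial ℝ) : ℝ :=
  ∑ j, (-(ipfj x f ω j (derivative (φ j)))
    + bdj x (fun i => godunov f (trM x ω i) (trP x ω i)) j (φ j))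

/-- Conservative-flux nonlinear form `N^c`. -/
def Nc [NeZero N] (x : Fin (N + 1) → ℝ) (p : ℕ) (ω φ : Fin N → Polynomial ℝ) : ℝ :=
  ∑ j, (-(ipfj x (fun w => w ^ p / (p : ℝ)) ω j (derivative (φ j)))
    + bdj x (fun i => consFlux p (trM x ω i) (trP x ω i)) j (φ j))

end FW

/-- Antiderivative `F(w) = w^(p+1)/(p(p+1))` of `f(w) = w^p/p`. -/
def Ff (p : ℕ) (w : ℝ) : ℝ := w ^ (p + 1) / ((p : ℝ) * ((p : ℝ) + 1))

lemma Ff_hasDerivAt {p : ℕ} (hp : 2 ≤ p) (c : ℝ) :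
    HasDerivAt (Ff p) (c ^ p / (p : ℝ)) c := by
  have hp0 : (p : ℝ) ≠ 0 := by
    have : (0 : ℝ) < p := by exact_mod_cast Nat.lt_of_lt_of_le (by norm_num) hp
    linarith
  have hp1 : (p : ℝ) + 1 ≠ 0 := by positivity
  have h : HasDerivAt (fun w : ℝ => w ^ (p + 1)) (((p : ℝ) + 1) * c ^ p) c := by
    have := hasDerivAt_pow (p + 1) c
    simpa using this
  have h2 := h.div_const ((p : ℝ) * ((p : ℝ) + 1))
  have e : c ^ p / (p : ℝ) = ((p : ℝ) + 1) * c ^ p / ((p : ℝ) * ((p : ℝ) + 1)) := by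
    rw [div_eq_div_iff hp0 (mul_ne_zero hp0 hp1)]
    ring
  rw [e]
  exact h2

lemma contF {p : ℕ} : Continuous (fun w : ℝ => w ^ p / (p : ℝ)) :=
  (continuous_pow p).div_const _

lemma integral_f {p : ℕ} (hp : 2 ≤ p) (u v : ℝ) :
    ∫ t in u..v, t ^ p / (p : ℝ) = Ff p v - Ff p u :=
  intervalIntegral.integral_eq_sub_of_hasDerivAt
    (fun t _ => Ff_hasDerivAt hp t) (contF.intervalIntegrable u v)

lemma godunov_entropy {p : ℕ} (hp : 2 ≤ p) (c d : ℝ) :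
    FW.godunov (fun w => w ^ p / (p : ℝ)) c d * (d - c) ≤ Ff p d - Ff p c := by
  set f : ℝ → ℝ := fun w => w ^ p / (p : ℝ) with hfdef
  have hf : Continuous f := contF
  rw [FW.godunov]
  split_ifs with hlt
  · -- c < d, flux is the inf
    set m := sInf (f '' Set.Icc c d) with hm
    have hbdd : BddBelow (f '' Set.Icc c d) :=
      (isCompact_Icc.image hf).bddBelow
    have hle : ∀ t ∈ Set.Icc c d, (fun _ : ℝ => m) t ≤ f t := fun t ht =>
      csInf_le hbdd (Set.mem_image_of_mem _ ht)
    have hmono := intervalIntegral.integral_mono_on (μ := MeasureTheory.volume) hlt.le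
      (continuous_const.intervalIntegrable _ _) (hf.intervalIntegrable c d) hle
    have hconst : (∫ _ in c..d, m) = (d - c) * m := by simp [smul_eq_mul]
    have hint : (∫ t in c..d, f t) = Ff p d - Ff p c := integral_f hp c d
    rw [hconst, hint] at hmono
    linarith
  · -- d ≤ c, flux is the sup
    have hdc : d ≤ c := not_lt.mp hlt
    set M := sSup (f '' Set.Icc d c) with hM
    have hbdd : BddAbove (f '' Set.Icc d c) :=
      (isCompact_Icc.image hf).bddAbove
    have hle : ∀ t ∈ Set.Icc d c, f t ≤ (fun _ : ℝ => M) t := fun t ht =>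
      le_csSup hbdd (Set.mem_image_of_mem _ ht)
    have hmono := intervalIntegral.integral_mono_on (μ := MeasureTheory.volume) hdc
      (hf.intervalIntegrable d c) (continuous_const.intervalIntegrable _ _) hle
    have hconst : (∫ _ in d..c, M) = (c - d) * M := by simp [smul_eq_mul]
    have hint : (∫ t in d..c, f t) = Ff p c - Ff p d := integral_f hp d c
    rw [hconst, hint] at hmono
    nlinarith [hmono]

lemma cell_integral {p : ℕ} (hp : 2 ≤ p) (P : Polynomial ℝ) (u v : ℝ) :
    (∫ t in u..v, (P.eval t) ^ p / (p : ℝ) * (derivative P).eval t)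
      = Ff p (P.eval v) - Ff p (P.eval u) := by
  apply intervalIntegral.integral_eq_sub_of_hasDerivAt
  · intro t _
    have h1 := Ff_hasDerivAt hp (P.eval t)
    have h2 : HasDerivAt (fun s => P.eval s) ((derivative P).eval t) t :=
      P.hasDerivAt t
    exact h1.comp t h2
  · apply Continuous.intervalIntegrable
    exact ((P.continuous.pow p).div_const _).mul (derivative P).continuous

theorem stmt5 {N : ℕ} [NeZero N] (hN : 1 ≤ N) (a b : ℝ) (hab : a < b)
    (x : Fin (N + 1) → ℝ) (hx : StrictMono x) (hxa : x 0 = a) (hxb : x (Fin.last N) = b)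
    (k : ℕ) (p : ℕ) (hp : 2 ≤ p)
    (ω : Fin N → Polynomial ℝ) (hω : FW.memV k ω) :
    0 ≤ FW.Nd x (fun w => w ^ p / (p : ℝ)) ω ω := by
  classical
  set f : ℝ → ℝ := fun w => w ^ p / (p : ℝ) with hfdef
  set g : Fin N → ℝ := fun i => FW.godunov f (FW.trM x ω i) (FW.trP x ω i) with hg
  set A : Fin N → ℝ := fun j => Ff p (FW.trP x ω j) - g j * FW.trP x ω j with hA
  set B : Fin N → ℝ := fun j => g j * FW.trM x ω j - Ff p (FW.trM x ω j) with hB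
  have hPshift : ∀ j : Fin N, FW.trP x ω (j - 1) = (ω j).eval (x j.castSucc) := by
    intro j
    simp [FW.trP, sub_add_cancel]
  have hcell : ∀ j : Fin N, FW.ipfj x f ω j (derivative (ω j))
      = Ff p (FW.trM x ω j) - Ff p (FW.trP x ω (j - 1)) := by
    intro j
    rw [FW.ipfj, hPshift j]
    exact cell_integral hp (ω j) (x j.castSucc) (x j.succ)
  have hterm : ∀ j : Fin N,
      (-(FW.ipfj x f ω j (derivative (ω j))) + FW.bdj x g j (ω j))
        = B j + A (j - 1) := by
    intro j
    rw [hcell j, FW.bdj, hA, hB]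
    have h1 : (ω j).eval (x j.succ) = FW.trM x ω j := rfl
    have h2 : (ω j).eval (x j.castSucc) = FW.trP x ω (j - 1) := (hPshift j).symm
    rw [h1, h2]
    ring
  have hNd : FW.Nd x f ω ω = ∑ j, B j + ∑ j, A (j - 1) := by
    rw [FW.Nd, ← Finset.sum_add_distrib]
    exact Finset.sum_congr rfl fun j _ => hterm j
  have hre : ∑ j : Fin N, A (j - 1) = ∑ j : Fin N, A j :=
    Fintype.sum_equiv (Equiv.subRight (1 : Fin N)) _ _ (fun j => rfl)
  rw [hNd, hre, ← Finset.sum_add_distrib]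
  apply Finset.sum_nonneg
  intro j _
  have := godunov_entropy hp (FW.trM x ω j) (FW.trP x ω j)
  simp only [hB, hA, hg]
  nlinarith [this]
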